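/- Let X be a real Banach space whose dual X* is isometrically isomorphic to ℓ₁. Suppose V is a weak*-closed linear subspace of X*, P : X* → X* is a weak*-continuous linear projection onto V with ‖P‖ ≤ 1, and T : V → ℓ₁ is a surjective linear isometry that is a homeomorphism from the weak* topology of X* (restricted to V) onto the weak* topology that ℓ₁ carries as the dual of c. Then there exists a linear isometric embedding of c into X. -/

import Mathlib

open Filter Topology Metric
open scoped ENNReal

noncomputable section

/-- The space `ℓ₁` of absolutely summable real sequences. -/
abbrev EllOne : Type := lp (fun _ : ℕ => ℝ) 1

/-- The subspace of `ℓ∞` consisting of convergent real sequences. -/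
def convSeq : Subspace ℝ (lp (fun _ : ℕ => ℝ) ∞) where
  carrier := {f | ∃ l : ℝ, Tendsto (fun n => f n) atTop (𝓝 l)}
  add_mem' := by
    rintro f g ⟨a, ha⟩ ⟨b, hb⟩
    exact ⟨a + b, by simpa [lp.coeFn_add] using ha.add hb⟩
  zero_mem' := ⟨0, by simp [lp.coeFn_zero]⟩
  smul_mem' := by
    rintro c f ⟨a, ha⟩
    exact ⟨c * a, by simpa [lp.coeFn_smul] using ha.const_mul c⟩

/-- The Banach space `c` of convergent real sequences with the sup norm,
realized as a subspace of `ℓ∞`. -/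
abbrev SpaceC : Type := ↥convSeq

/-- A normed space is polyhedral if the unit ball of each of its
finite-dimensional subspaces is a polytope (the convex hull of finitely many points). -/
def IsPolyhedralSpace (X : Type*) [NormedAddCommGroup X] [NormedSpace ℝ X] : Prop :=
  ∀ Y : Subspace ℝ X, FiniteDimensional ℝ Y →
    ∃ F : Set Y, F.Finite ∧ closedBall (0 : Y) 1 = convexHull ℝ F

/-- The set of extreme points of the closed unit ball of the dual of `X`. -/
def extBdual (X : Type*) [NormedAddCommGroup X] [NormedSpace ℝ X] :
    Set (StrongDual ℝ X) :=
  Set.extremePoints ℝ (closedBall (0 : StrongDual ℝ X) 1)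

/-- `D(x) = {x* ∈ S_{X*} : x*(x) = 1}`. -/
def Dface {X : Type*} [NormedAddCommGroup X] [NormedSpace ℝ X] (x : X) :
    Set (StrongDual ℝ X) :=
  {f | ‖f‖ = 1 ∧ f x = 1}

/-- The limit of a convergent sequence `x ∈ c`. -/
def cLim (x : SpaceC) : ℝ :=
  limUnder atTop (fun n => (x : lp (fun _ : ℕ => ℝ) ∞) n)

/-- The duality pairing identifying `ℓ₁` with the dual `c*` of `c`:
`f(x) = f(0)·lim_i x(i) + Σ_{i≥0} f(i+1)·x(i)` (indices starting from `0`). -/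
def cPairing (f : EllOne) (x : SpaceC) : ℝ :=
  f 0 * cLim x + ∑' i : ℕ, f (i + 1) * (x : lp (fun _ : ℕ => ℝ) ∞) i

/-- The weak* topology of `X*` restricted to a subspace `V ⊆ X*`. -/
def wstarSubspaceTop {X : Type} [NormedAddCommGroup X] [NormedSpace ℝ X]
    (V : Submodule ℝ (StrongDual ℝ X)) : TopologicalSpace V :=
  TopologicalSpace.induced
    (fun v : V => StrongDual.toWeakDual (v : StrongDual ℝ X)) inferInstance

/-- The weak* topology that `ℓ₁` carries as the dual of `c`, i.e. the topology of
pointwise convergence of the pairing `cPairing` against elements of `c`. -/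
def ellOneWstarAsDualC : TopologicalSpace EllOne :=
  TopologicalSpace.induced (fun f : EllOne => fun x : SpaceC => cPairing f x)
    Pi.topologicalSpace

lemma ellone_summable (f : EllOne) : Summable fun i => ‖f i‖ := by
  have h := (lp.memℓp f).summable (by norm_num : (0:ℝ) < (1:ℝ≥0∞).toReal)
  simpa using h

lemma ellone_norm_eq (f : EllOne) : ‖f‖ = ∑' i, ‖f i‖ := by
  have h := lp.norm_eq_tsum_rpow (by norm_num : (0:ℝ) < (1:ℝ≥0∞).toReal) f
  simpa using h

lemma ellone_tail_summable (f : EllOne) : Summable fun i => ‖f (i+1)‖ :=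
  (ellone_summable f).comp_injective (add_left_injective 1)

lemma spaceC_coe_bound (x : SpaceC) (i : ℕ) : ‖(x : lp (fun _ : ℕ => ℝ) ∞) i‖ ≤ ‖x‖ :=
  lp.norm_apply_le_norm (by norm_num) (x : lp (fun _ : ℕ => ℝ) ∞) i

lemma pair_summable (f : EllOne) (x : SpaceC) :
    Summable fun i => f (i + 1) * (x : lp (fun _ : ℕ => ℝ) ∞) i := by
  refine Summable.of_norm_bounded (g := fun i => ‖f (i+1)‖ * ‖x‖)
    ((ellone_tail_summable f).mul_right _) fun i => ?_
  rw [norm_mul]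
  exact mul_le_mul_of_nonneg_left (spaceC_coe_bound x i) (norm_nonneg _)

lemma cLim_spec (x : SpaceC) :
    Tendsto (fun n => (x : lp (fun _ : ℕ => ℝ) ∞) n) atTop (𝓝 (cLim x)) := by
  obtain ⟨l, hl⟩ := x.2
  rwa [cLim, hl.limUnder_eq]

lemma abs_cLim_le (x : SpaceC) : |cLim x| ≤ ‖x‖ := by
  have h := (cLim_spec x).abs
  refine le_of_tendsto h (Eventually.of_forall fun n => ?_)
  exact spaceC_coe_bound x n

lemma cLim_add (x y : SpaceC) : cLim (x + y) = cLim x + cLim y := by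
  have h : Tendsto (fun n => ((x + y : SpaceC) : lp (fun _ : ℕ => ℝ) ∞) n) atTop
      (𝓝 (cLim x + cLim y)) := by
    have := (cLim_spec x).add (cLim_spec y)
    simpa [lp.coeFn_add] using this
  exact tendsto_nhds_unique (cLim_spec (x + y)) h

lemma cLim_smul (c : ℝ) (x : SpaceC) : cLim (c • x) = c * cLim x := by
  have h : Tendsto (fun n => ((c • x : SpaceC) : lp (fun _ : ℕ => ℝ) ∞) n) atTop
      (𝓝 (c * cLim x)) := by
    have := (cLim_spec x).const_mul c
    simpa [lp.coeFn_smul] using this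
  exact tendsto_nhds_unique (cLim_spec (c • x)) h

lemma cPairing_add_left (f g : EllOne) (x : SpaceC) :
    cPairing (f + g) x = cPairing f x + cPairing g x := by
  unfold cPairing
  have hs : ∑' i, (f + g) (i + 1) * (x : lp (fun _ : ℕ => ℝ) ∞) i
      = ∑' i, f (i + 1) * (x : lp (fun _ : ℕ => ℝ) ∞) i
        + ∑' i, g (i + 1) * (x : lp (fun _ : ℕ => ℝ) ∞) i := by
    rw [← Summable.tsum_add (pair_summable f x) (pair_summable g x)]
    apply tsum_congr
    intro i
    rw [lp.coeFn_add]
    simp [add_mul]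
  rw [hs, lp.coeFn_add]
  simp [add_mul]
  ring

lemma cPairing_smul_left (c : ℝ) (f : EllOne) (x : SpaceC) :
    cPairing (c • f) x = c * cPairing f x := by
  unfold cPairing
  have hs : ∑' i, (c • f) (i + 1) * (x : lp (fun _ : ℕ => ℝ) ∞) i
      = c * ∑' i, f (i + 1) * (x : lp (fun _ : ℕ => ℝ) ∞) i := by
    rw [← tsum_mul_left]
    apply tsum_congr
    intro i
    rw [lp.coeFn_smul]
    simp [mul_assoc]
  rw [hs, lp.coeFn_smul]
  simp
  ring

lemma cPairing_add_right (f : EllOne) (x y : SpaceC) :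
    cPairing f (x + y) = cPairing f x + cPairing f y := by
  unfold cPairing
  have hc : ∀ i, ((x + y : SpaceC) : lp (fun _ : ℕ => ℝ) ∞) i
      = (x : lp (fun _ : ℕ => ℝ) ∞) i + (y : lp (fun _ : ℕ => ℝ) ∞) i := by
    intro i
    have : ((x + y : SpaceC) : lp (fun _ : ℕ => ℝ) ∞)
        = (x : lp (fun _ : ℕ => ℝ) ∞) + (y : lp (fun _ : ℕ => ℝ) ∞) := rfl
    rw [this, lp.coeFn_add]
    rfl
  have hs : ∑' i, f (i + 1) * ((x + y : SpaceC) : lp (fun _ : ℕ => ℝ) ∞) i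
      = ∑' i, f (i + 1) * (x : lp (fun _ : ℕ => ℝ) ∞) i
        + ∑' i, f (i + 1) * (y : lp (fun _ : ℕ => ℝ) ∞) i := by
    rw [← Summable.tsum_add (pair_summable f x) (pair_summable f y)]
    apply tsum_congr
    intro i
    rw [hc i]
    ring
  rw [hs, cLim_add]
  ring

lemma cPairing_smul_right (f : EllOne) (c : ℝ) (x : SpaceC) :
    cPairing f (c • x) = c * cPairing f x := by
  unfold cPairing
  have hc : ∀ i, ((c • x : SpaceC) : lp (fun _ : ℕ => ℝ) ∞) i
      = c * (x : lp (fun _ : ℕ => ℝ) ∞) i := by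
    intro i
    have : ((c • x : SpaceC) : lp (fun _ : ℕ => ℝ) ∞)
        = c • (x : lp (fun _ : ℕ => ℝ) ∞) := rfl
    rw [this, lp.coeFn_smul]
    rfl
  have hs : ∑' i, f (i + 1) * ((c • x : SpaceC) : lp (fun _ : ℕ => ℝ) ∞) i
      = c * ∑' i, f (i + 1) * (x : lp (fun _ : ℕ => ℝ) ∞) i := by
    rw [← tsum_mul_left]
    apply tsum_congr
    intro i
    rw [hc i]
    ring
  rw [hs, cLim_smul]
  ring

lemma cPairing_abs_le (f : EllOne) (x : SpaceC) : |cPairing f x| ≤ ‖f‖ * ‖x‖ := by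
  have hnorm : ‖f‖ = ‖f 0‖ + ∑' i, ‖f (i + 1)‖ := by
    rw [ellone_norm_eq, Summable.tsum_eq_zero_add (ellone_summable f)]
  have h1 : |f 0 * cLim x| ≤ ‖f 0‖ * ‖x‖ := by
    rw [abs_mul]
    exact mul_le_mul_of_nonneg_left (abs_cLim_le x) (abs_nonneg _)
  have h2 : |∑' i, f (i + 1) * (x : lp (fun _ : ℕ => ℝ) ∞) i|
      ≤ (∑' i, ‖f (i + 1)‖) * ‖x‖ := by
    rw [← tsum_mul_right, ← Real.norm_eq_abs]
    refine (norm_tsum_le_tsum_norm ?_).trans (Summable.tsum_le_tsum (fun i => ?_) ?_ ?_)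
    · refine Summable.of_nonneg_of_le (fun i => norm_nonneg _) (fun i => ?_)
        ((ellone_tail_summable f).mul_right ‖x‖)
      rw [norm_mul]
      exact mul_le_mul_of_nonneg_left (spaceC_coe_bound x i) (norm_nonneg _)
    · rw [norm_mul]
      exact mul_le_mul_of_nonneg_left (spaceC_coe_bound x i) (norm_nonneg _)
    · refine Summable.of_nonneg_of_le (fun i => norm_nonneg _) (fun i => ?_)
        ((ellone_tail_summable f).mul_right ‖x‖)
      rw [norm_mul]
      exact mul_le_mul_of_nonneg_left (spaceC_coe_bound x i) (norm_nonneg _)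
    · exact (ellone_tail_summable f).mul_right ‖x‖
  calc |cPairing f x| ≤ |f 0 * cLim x| + |∑' i, f (i + 1) * (x : lp (fun _ : ℕ => ℝ) ∞) i| :=
        abs_add_le _ _
    _ ≤ ‖f 0‖ * ‖x‖ + (∑' i, ‖f (i + 1)‖) * ‖x‖ := add_le_add h1 h2
    _ = ‖f‖ * ‖x‖ := by rw [hnorm]; ring

lemma cPairing_single (n : ℕ) (x : SpaceC) :
    cPairing (lp.single 1 (n + 1) (1 : ℝ)) x = (x : lp (fun _ : ℕ => ℝ) ∞) n := by
  unfold cPairing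
  have h0 : (lp.single 1 (n + 1) (1 : ℝ) : EllOne) 0 = 0 :=
    lp.single_apply_ne _ _ _ (by omega)
  have hs : ∑' i, (lp.single 1 (n + 1) (1 : ℝ) : EllOne) (i + 1) * (x : lp (fun _ : ℕ => ℝ) ∞) i
      = (x : lp (fun _ : ℕ => ℝ) ∞) n := by
    rw [tsum_eq_single n]
    · rw [lp.single_apply_self, one_mul]
    · intro i hi
      rw [lp.single_apply_ne _ _ _ (by omega), zero_mul]
  rw [h0, hs, zero_mul, zero_add]

lemma weakdual_repr {X : Type} [NormedAddCommGroup X] [NormedSpace ℝ X]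
    (φ : StrongDual ℝ X →ₗ[ℝ] ℝ)
    (hφ : Continuous fun f : WeakDual ℝ X => φ (WeakDual.toStrongDual f)) :
    ∃ x : X, ∀ f : StrongDual ℝ X, φ f = f x := by
  classical
  have h0 : {f : WeakDual ℝ X | |φ (WeakDual.toStrongDual f)| < 1} ∈ 𝓝 (0 : WeakDual ℝ X) := by
    have : Continuous fun f : WeakDual ℝ X => |φ (WeakDual.toStrongDual f)| := hφ.abs
    have h1 : IsOpen {f : WeakDual ℝ X | |φ (WeakDual.toStrongDual f)| < 1} :=
      isOpen_lt this continuous_const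
    refine h1.mem_nhds ?_
    simp
  have hnhds : 𝓝 (0 : WeakDual ℝ X) =
      Filter.comap (fun (f : WeakDual ℝ X) (x : X) => f x) (𝓝 (fun _ : X => (0:ℝ))) := by
    have := nhds_induced (fun (f : WeakDual ℝ X) (x : X) =>
      topDualPairing ℝ X (WeakDual.toStrongDual f) x) (0 : WeakDual ℝ X)
    exact this
  rw [hnhds, Filter.mem_comap] at h0
  obtain ⟨s, hs, hsub⟩ := h0
  rw [nhds_pi] at hs
  obtain ⟨I, t, ht, hIt⟩ := Filter.mem_pi'.mp hs
  -- key: vanishing on I implies in ker φ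
  have key : ∀ f : StrongDual ℝ X, (∀ x ∈ I, f x = 0) → φ f = 0 := by
    intro f hf
    by_contra hne
    have hmem : ∀ c : ℝ, |φ (c • f)| < 1 := by
      intro c
      apply hsub
      apply hIt
      refine Set.mem_pi.mpr fun x hx => ?_
      show topDualPairing ℝ X (WeakDual.toStrongDual (c • f)) x ∈ t x
      have hz : topDualPairing ℝ X (WeakDual.toStrongDual (c • f)) x = 0 := by
        simp only [topDualPairing_apply]
        show c • f x = 0
        rw [hf x hx, smul_zero]
      rw [hz]
      exact mem_of_mem_nhds (ht x)
    have := hmem (2 / φ f)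
    rw [map_smul] at this
    rw [smul_eq_mul, div_mul_cancel₀ 2 hne] at this
    norm_num at this
  -- use span lemma
  set L : I → (StrongDual ℝ X →ₗ[ℝ] ℝ) :=
    fun x : I => (topDualPairing ℝ X).flip (x : X) with hL
  have hker : ⨅ i : I, LinearMap.ker (L i) ≤ LinearMap.ker φ := by
    intro f hf
    simp only [Submodule.mem_iInf, LinearMap.mem_ker] at hf ⊢
    refine key f fun x hx => ?_
    simpa [hL, LinearMap.flip_apply, topDualPairing_apply] using hf ⟨x, hx⟩
  have hspan := mem_span_of_iInf_ker_le_ker hker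
  obtain ⟨c, hc⟩ := (Submodule.mem_span_range_iff_exists_fun ℝ).mp hspan
  refine ⟨∑ i : I, c i • (i : X), fun f => ?_⟩
  rw [← hc, map_sum]
  simp [hL, smul_eq_mul, mul_comm, topDualPairing_apply]



/-- If `X` is a predual of `ℓ₁`, `V ⊆ X*` is a weak*-closed subspace which is the range
of a weak*-continuous contractive projection `P` on `X*`, and `T : V → ℓ₁` is a surjective
linear isometry which is a homeomorphism from the weak* topology of `X*` restricted to `V`
onto the weak* topology of `ℓ₁` as the dual of `c`, then `X` contains an isometric copy
of `c`. -/
theorem isometric_c_of_wstar_complemented_dual_copy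
    {X : Type} [NormedAddCommGroup X] [NormedSpace ℝ X] [CompleteSpace X]
    (hdual : Nonempty (StrongDual ℝ X ≃ₗᵢ[ℝ] EllOne))
    (V : Submodule ℝ (StrongDual ℝ X))
    (hVclosed : IsClosed {f : WeakDual ℝ X | WeakDual.toStrongDual f ∈ V})
    (P : StrongDual ℝ X →L[ℝ] StrongDual ℝ X)
    (hPw : Continuous fun f : WeakDual ℝ X =>
      StrongDual.toWeakDual (P (WeakDual.toStrongDual f)))
    (hPrange : ∀ f, P f ∈ V) (hPid : ∀ v ∈ V, P v = v) (hPnorm : ‖P‖ ≤ 1)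
    (T : V →ₗ[ℝ] EllOne)
    (hTiso : ∀ v : V, ‖T v‖ = ‖v‖) (hTsurj : Function.Surjective T)
    (hTcont : Continuous[wstarSubspaceTop V, ellOneWstarAsDualC] T)
    (hTopen : @IsOpenMap _ _ (wstarSubspaceTop V) ellOneWstarAsDualC T) :
    Nonempty (SpaceC →ₗᵢ[ℝ] X) := by
  classical
  set Pv : StrongDual ℝ X → V := fun f => ⟨P f, hPrange f⟩ with hPv
  set q : SpaceC → StrongDual ℝ X → ℝ := fun x f => cPairing (T (Pv f)) x with hq
  have hPv_add : ∀ f g, Pv (f + g) = Pv f + Pv g := fun f g => Subtype.ext (map_add P f g)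
  have hPv_smul : ∀ (c : ℝ) f, Pv (c • f) = c • Pv f := fun c f => Subtype.ext (map_smul P c f)
  have hPvcont : @Continuous (WeakDual ℝ X) V _ (wstarSubspaceTop V)
      (fun f : WeakDual ℝ X => Pv (WeakDual.toStrongDual f)) := by
    unfold wstarSubspaceTop
    exact continuous_induced_rng.2 hPw
  have hqcont : ∀ x : SpaceC,
      Continuous fun f : WeakDual ℝ X => q x (WeakDual.toStrongDual f) := by
    intro x
    have h1 : @Continuous EllOne ℝ ellOneWstarAsDualC _ (fun g : EllOne => cPairing g x) := by
      unfold ellOneWstarAsDualC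
      exact @Continuous.comp EllOne (SpaceC → ℝ) ℝ
        (TopologicalSpace.induced (fun g y => cPairing g y) Pi.topologicalSpace) _ _
        _ _ (continuous_apply x)
        (@continuous_induced_dom EllOne (SpaceC → ℝ) (fun g y => cPairing g y) _)
    have h2 : @Continuous V ℝ (wstarSubspaceTop V) _ (fun v : V => cPairing (T v) x) :=
      @Continuous.comp V EllOne ℝ (wstarSubspaceTop V) ellOneWstarAsDualC _
        _ _ h1 hTcont
    have h3 : Continuous ((fun v : V => cPairing (T v) x) ∘
        (fun f : WeakDual ℝ X => Pv (WeakDual.toStrongDual f))) :=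
      @Continuous.comp (WeakDual ℝ X) V ℝ _ (wstarSubspaceTop V) _
        _ _ h2 hPvcont
    exact h3
  have hrep : ∀ x : SpaceC, ∃ y : X, ∀ f : StrongDual ℝ X, q x f = f y := by
    intro x
    refine weakdual_repr ⟨⟨fun f => q x f, fun f g => ?_⟩, fun c f => ?_⟩ (hqcont x)
    · show q x (f + g) = q x f + q x g
      simp only [hq, hPv_add, map_add]
      exact cPairing_add_left _ _ _
    · show q x (c • f) = c • q x f
      simp only [hq, hPv_smul, map_smul, smul_eq_mul]
      exact cPairing_smul_left _ _ _
  choose Φ hΦ using hrep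
  have hΦadd : ∀ x y : SpaceC, Φ (x + y) = Φ x + Φ y := by
    intro x y
    rw [NormedSpace.eq_iff_forall_dual_eq ℝ]
    intro g
    rw [← hΦ (x + y) g, map_add, ← hΦ x g, ← hΦ y g]
    exact cPairing_add_right _ _ _
  have hΦsmul : ∀ (c : ℝ) (x : SpaceC), Φ (c • x) = c • Φ x := by
    intro c x
    rw [NormedSpace.eq_iff_forall_dual_eq ℝ]
    intro g
    rw [← hΦ (c • x) g, map_smul, ← hΦ x g]
    simpa using cPairing_smul_right _ c _
  have hub : ∀ x : SpaceC, ‖Φ x‖ ≤ ‖x‖ := by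
    intro x
    refine NormedSpace.norm_le_dual_bound ℝ (Φ x) (norm_nonneg x) fun g => ?_
    rw [← hΦ x g]
    have h1 : ‖q x g‖ ≤ ‖T (Pv g)‖ * ‖x‖ := by
      rw [Real.norm_eq_abs]
      exact cPairing_abs_le _ _
    have h2 : ‖T (Pv g)‖ ≤ ‖g‖ := by
      rw [hTiso]
      show ‖P g‖ ≤ ‖g‖
      calc ‖P g‖ ≤ ‖P‖ * ‖g‖ := P.le_opNorm g
        _ ≤ 1 * ‖g‖ := mul_le_mul_of_nonneg_right hPnorm (norm_nonneg g)
        _ = ‖g‖ := one_mul _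
    calc ‖q x g‖ ≤ ‖T (Pv g)‖ * ‖x‖ := h1
      _ ≤ ‖g‖ * ‖x‖ := mul_le_mul_of_nonneg_right h2 (norm_nonneg x)
      _ = ‖x‖ * ‖g‖ := mul_comm _ _
  have hlb : ∀ x : SpaceC, ‖x‖ ≤ ‖Φ x‖ := by
    intro x
    have hx : ‖x‖ = ‖(x : lp (fun _ : ℕ => ℝ) ∞)‖ := rfl
    rw [hx]
    refine lp.norm_le_of_forall_le (norm_nonneg (Φ x)) fun n => ?_
    obtain ⟨v, hv⟩ := hTsurj (lp.single 1 (n + 1) (1 : ℝ))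
    have hvnorm : ‖v‖ = 1 := by
      rw [← hTiso v, hv]
      have := lp.norm_single (p := 1) (E := fun _ : ℕ => ℝ)
        (by norm_num) (n + 1) (1 : ℝ)
      simpa using this
    have hPvv : Pv (v : StrongDual ℝ X) = v := Subtype.ext (hPid v v.2)
    have heval : (v : StrongDual ℝ X) (Φ x) = (x : lp (fun _ : ℕ => ℝ) ∞) n := by
      rw [← hΦ x (v : StrongDual ℝ X)]
      show cPairing (T (Pv (v : StrongDual ℝ X))) x = _
      rw [hPvv, hv]
      exact cPairing_single n x
    calc ‖(x : lp (fun _ : ℕ => ℝ) ∞) n‖ = ‖(v : StrongDual ℝ X) (Φ x)‖ := by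
          rw [heval]
      _ ≤ ‖(v : StrongDual ℝ X)‖ * ‖Φ x‖ :=
          (v : StrongDual ℝ X).le_opNorm (Φ x)
      _ = ‖Φ x‖ := by
          rw [show ‖(v : StrongDual ℝ X)‖ = ‖v‖ from rfl, hvnorm, one_mul]
  exact ⟨⟨⟨⟨Φ, hΦadd⟩, hΦsmul⟩, fun x => le_antisymm (hub x) (hlb x)⟩⟩

end
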